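/- Let n > m ≥ 1 be integers with n − m − 1 ≥ 0. Then the integral over D^m (where D = {z ∈ ℂ : |z| ≤ 1} and each coordinate carries Lebesgue measure on ℂ) of ∏_{1 ≤ i < j ≤ m} |z_i − z_j|² · ∏_{i=1}^m (1 − |z_i|²)^{n−m−1} equals π^m · m! · ∏_{k=0}^{m−1} [ binom(n−m+k−1, k)^{−1} · 1/(n−m+k) ], where binom denotes the binomial coefficient. -/

import Mathlib

open MeasureTheory Finset
open Real

lemma angular (k : ℤ) (hk : k ≠ 0) :
    ∫ θ : ℝ in Set.Ioo (-π) π, Complex.exp ((k : ℂ) * θ * Complex.I) = 0 := by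
  rw [← integral_Ioc_eq_integral_Ioo,
    ← intervalIntegral.integral_of_le (by linarith [pi_pos] : -π ≤ π)]
  have h2 : ∀ θ : ℝ, (k : ℂ) * θ * Complex.I = ((k : ℂ) * Complex.I) * θ := fun θ => by ring
  simp_rw [h2]
  rw [integral_exp_mul_complex (by simp [hk, Complex.I_ne_zero])]
  have h3 : ∀ s : ℝ, (k : ℂ) * Complex.I * s = k * ((s:ℂ) * Complex.I) := fun s => by ring
  rw [h3 π, h3 (-π), Complex.exp_int_mul, Complex.exp_int_mul]
  have hn : Complex.exp ((-π : ℝ) * Complex.I) = -1 := by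
    push_cast
    rw [neg_mul, Complex.exp_neg, Complex.exp_pi_mul_I]
    norm_num
  rw [hn, Complex.exp_pi_mul_I, sub_self, zero_div]

lemma prodfact (a c : ℕ) :
    a.factorial * ∏ j ∈ range (c+1), (a+1+j) = (a+c+1).factorial := by
  induction c with
  | zero => simp [Nat.factorial_succ]; ring
  | succ c ih =>
      rw [prod_range_succ, ← mul_assoc, ih]
      have h2 : a + (c+1) + 1 = (a + c + 1) + 1 := by omega
      rw [h2]
      conv_rhs => rw [Nat.factorial_succ]
      ring

lemma radial (a c : ℕ) :
    ∫ r : ℝ in (0:ℝ)..1, (r:ℂ)^(2*a+1) * ((1 - r^2 : ℝ):ℂ)^c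
      = ((a.factorial * c.factorial / (2 * (a+c+1).factorial) : ℝ) : ℂ) := by
  have key : (∫ x : ℝ in (0:ℝ)..1, (2*x) • (((x^2:ℝ):ℂ)^a * ((1 - x^2 : ℝ):ℂ)^c))
      = ∫ u : ℝ in (0:ℝ)..1, ((u:ℝ):ℂ)^a * ((1 - u : ℝ):ℂ)^c := by
    have := intervalIntegral.integral_comp_smul_deriv (a := (0:ℝ)) (b := 1)
      (f := fun x : ℝ => x^2) (f' := fun x : ℝ => 2*x)
      (g := fun u : ℝ => ((u:ℝ):ℂ)^a * ((1 - u : ℝ):ℂ)^c)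
      (fun x _ => by simpa using (hasDerivAt_pow 2 x)) (by fun_prop) (by fun_prop)
    simpa using this
  have h1 : ∀ r : ℝ, (r:ℂ)^(2*a+1) * ((1 - r^2 : ℝ):ℂ)^c
      = (2:ℂ)⁻¹ * ((2*r) • (((r^2:ℝ):ℂ)^a * ((1 - r^2 : ℝ):ℂ)^c)) := by
    intro r
    push_cast [Complex.real_smul]
    ring
  simp_rw [h1]
  rw [intervalIntegral.integral_const_mul, key]
  have hbeta : (∫ u : ℝ in (0:ℝ)..1, ((u:ℝ):ℂ)^a * ((1 - u : ℝ):ℂ)^c)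
      = Complex.betaIntegral (a+1) (c+1) := by
    rw [Complex.betaIntegral]
    refine intervalIntegral.integral_congr fun x _ => ?_
    have e1 : ((a:ℂ)+1) - 1 = ((a:ℕ):ℂ) := by ring
    have e2 : ((c:ℂ)+1) - 1 = ((c:ℕ):ℂ) := by ring
    rw [e1, e2, Complex.cpow_natCast, Complex.cpow_natCast]
    push_cast
    ring
  rw [hbeta, Complex.betaIntegral_eval_nat_add_one_right (by simp; positivity) c]
  have hkeyC : ((a.factorial : ℕ) : ℂ) * ∏ j ∈ range (c+1), (((a:ℕ):ℂ)+1+j)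
      = (((a+c+1).factorial : ℕ) : ℂ) := by
    rw [show (∏ j ∈ range (c+1), (((a:ℕ):ℂ)+1+j)) = (((∏ j ∈ range (c+1), (a+1+j) : ℕ)) : ℂ) by
      push_cast; rfl]
    exact_mod_cast congrArg (Nat.cast (R := ℂ)) (prodfact a c)
  have hfa : ((a.factorial : ℕ) : ℂ) ≠ 0 := by exact_mod_cast Nat.factorial_ne_zero a
  have hF : (((a+c+1).factorial : ℕ) : ℂ) ≠ 0 := by exact_mod_cast Nat.factorial_ne_zero _
  have hQ : (∏ j ∈ range (c+1), (((a:ℕ):ℂ)+1+j)) ≠ 0 := by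
    intro h; rw [h, mul_zero] at hkeyC; exact hF hkeyC.symm
  have hrhs : ((a.factorial * c.factorial / (2*(a+c+1).factorial) : ℝ) : ℂ)
      = (a.factorial : ℂ) * c.factorial / (2 * ((a+c+1).factorial : ℂ)) := by
    push_cast; ring
  rw [hrhs, ← hkeyC]
  field_simp

lemma discInt (a b c : ℕ) :
    (∫ w : ℂ, (Metric.closedBall (0:ℂ) 1).indicator
      (fun w => w^a * ((starRingEnd ℂ) w)^b * ((1 - ‖w‖^2 : ℝ) : ℂ)^c) w)
    = if a = b then ((π * a.factorial * c.factorial / (a+c+1).factorial : ℝ) : ℂ) else 0 := by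
  rw [← Complex.integral_comp_polarCoord_symm, polarCoord_target]
  have hmeas : MeasurableSet (Set.Ioi (0:ℝ) ×ˢ Set.Ioo (-π) π) :=
    measurableSet_Ioi.prod measurableSet_Ioo
  rw [setIntegral_congr_fun hmeas (g := fun p : ℝ × ℝ =>
      (Set.indicator (Set.Iic 1) (fun r : ℝ => (r:ℂ)^(a+b+1) * ((1 - r^2 : ℝ):ℂ)^c) p.1)
      * Complex.exp (((a:ℂ) - b) * p.2 * Complex.I)) ?_]
  · rw [Measure.volume_eq_prod]
    show (∫ p : ℝ × ℝ in Set.Ioi (0:ℝ) ×ˢ Set.Ioo (-π) π,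
        (fun r : ℝ => (Set.Iic 1).indicator (fun r : ℝ => (r:ℂ)^(a+b+1) * ((1 - r^2 : ℝ):ℂ)^c) r) p.1
        * (fun θ : ℝ => Complex.exp (((a:ℂ) - b) * θ * Complex.I)) p.2
        ∂((volume : Measure ℝ).prod volume)) = _
    rw [MeasureTheory.setIntegral_prod_mul
      (f := fun r : ℝ => (Set.Iic 1).indicator (fun r : ℝ => (r:ℂ)^(a+b+1) * ((1 - r^2 : ℝ):ℂ)^c) r)
      (g := fun θ : ℝ => Complex.exp (((a:ℂ) - b) * θ * Complex.I))]
    rw [setIntegral_indicator measurableSet_Iic, Set.Ioi_inter_Iic,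
      ← intervalIntegral.integral_of_le (by norm_num : (0:ℝ) ≤ 1)]
    by_cases hab : a = b
    · subst hab
      rw [if_pos rfl]
      have hG : (∫ θ : ℝ in Set.Ioo (-π) π, Complex.exp (((a:ℂ) - a) * θ * Complex.I))
          = ((2 * π : ℝ) : ℂ) := by
        simp only [sub_self, zero_mul, Complex.exp_zero]
        rw [setIntegral_const]
        rw [measureReal_def, Real.volume_Ioo]
        rw [ENNReal.toReal_ofReal (by linarith [pi_pos] : (0:ℝ) ≤ π - -π)]
        push_cast [Complex.real_smul]
        ring
      rw [hG, show a + a + 1 = 2*a+1 from by ring, radial]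
      rw [← Complex.ofReal_mul, Complex.ofReal_inj]
      have hfac : ((a+a+1).factorial : ℝ) ≠ 0 := by exact_mod_cast Nat.factorial_ne_zero _
      field_simp
    · rw [if_neg hab]
      have hcast : ((a:ℂ) - b) = (((a : ℤ) - b : ℤ) : ℂ) := by push_cast; ring
      simp_rw [hcast]
      rw [angular _ (sub_ne_zero.mpr (by exact_mod_cast hab)), mul_zero]
  · rintro ⟨r, θ⟩ ⟨hr, hθ⟩
    dsimp only
    simp only [Set.mem_Ioi] at hr
    have hz : Complex.polarCoord.symm (r, θ) = (r : ℂ) * Complex.exp (θ * Complex.I) := by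
      rw [Complex.polarCoord_symm_apply, Complex.exp_mul_I]
      norm_num
    have hnorm : ‖Complex.polarCoord.symm (r, θ)‖ = r := by
      rw [hz, norm_mul, Complex.norm_exp_ofReal_mul_I, mul_one, Complex.norm_real,
        Real.norm_eq_abs, abs_of_pos hr]
    have hmem : Complex.polarCoord.symm (r, θ) ∈ Metric.closedBall (0:ℂ) 1 ↔ r ≤ 1 := by
      rw [Metric.mem_closedBall, dist_zero_right, hnorm]
    by_cases h : r ≤ 1
    · rw [Set.indicator_of_mem (hmem.mpr h), Set.indicator_of_mem (Set.mem_Iic.mpr h)]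
      have hnorm' : ‖(r:ℂ) * Complex.exp (θ * Complex.I)‖ = r := hz ▸ hnorm
      rw [hz]
      have hconj : (starRingEnd ℂ) ((r : ℂ) * Complex.exp (θ * Complex.I))
          = (r : ℂ) * Complex.exp (-(θ * Complex.I)) := by
        rw [map_mul, Complex.conj_ofReal, ← Complex.exp_conj]
        congr 1
        simp [Complex.conj_ofReal]
      rw [hconj, hnorm']
      rw [mul_pow, mul_pow, ← Complex.exp_nat_mul, ← Complex.exp_nat_mul, Complex.real_smul]
      rw [show ((a:ℂ) - b) * θ * Complex.I = (a:ℂ) * (θ * Complex.I) + (b:ℂ) * -(θ * Complex.I)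
        from by ring, Complex.exp_add]
      push_cast
      ring
    · rw [Set.indicator_of_notMem (fun hh => h (hmem.mp hh)),
        Set.indicator_of_notMem (fun hh => h (Set.mem_Iic.mp hh)), smul_zero, zero_mul]

lemma vandermonde_expand (m : ℕ) (z : Fin m → ℂ) :
    Matrix.det (Matrix.vandermonde z)
      = ∑ σ : Equiv.Perm (Fin m), ((Equiv.Perm.sign σ : ℤ) : ℂ) * ∏ i, z i ^ ((σ i : ℕ)) := by
  rw [Matrix.det_apply']
  rw [← Equiv.sum_comp (Equiv.inv (Equiv.Perm (Fin m)))
    (fun σ => ((Equiv.Perm.sign σ : ℤ) : ℂ) * ∏ i, z i ^ ((σ i : ℕ)))]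
  refine Finset.sum_congr rfl fun σ _ => ?_
  simp only [Equiv.inv_apply]
  rw [Equiv.Perm.sign_inv]
  congr 1
  rw [← Equiv.prod_comp σ (fun i => z i ^ ((σ⁻¹ i : ℕ)))]
  refine Finset.prod_congr rfl fun i _ => ?_
  simp [Matrix.vandermonde]

lemma pointwise (c m : ℕ) (z : Fin m → ℂ) :
    (((∏ i : Fin m, ∏ j ∈ Ioi i, ‖z i - z j‖^2) * ∏ i : Fin m, (1 - ‖z i‖^2)^c : ℝ) : ℂ)
    = ∑ σ : Equiv.Perm (Fin m), ∑ τ : Equiv.Perm (Fin m),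
        (((Equiv.Perm.sign σ : ℤ) : ℂ) * ((Equiv.Perm.sign τ : ℤ) : ℂ)) *
        ∏ i : Fin m, ((z i)^((σ i : ℕ)) * ((starRingEnd ℂ) (z i))^((τ i : ℕ))
          * ((1 - ‖z i‖^2 : ℝ) : ℂ)^c) := by
  have key1 : ∀ w : ℂ, ((‖w‖^2 : ℝ) : ℂ) = w * (starRingEnd ℂ) w := fun w => by
    rw [Complex.mul_conj, Complex.normSq_eq_norm_sq]
  rw [Complex.ofReal_mul, Complex.ofReal_prod, Complex.ofReal_prod]
  simp_rw [Complex.ofReal_prod]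
  simp_rw [key1]
  simp_rw [Complex.ofReal_pow]
  have flip : ∀ u v : ℂ, (u - v) * (starRingEnd ℂ) (u - v)
      = (v - u) * (starRingEnd ℂ) (v - u) := fun u v => by
    rw [show u - v = -(v-u) from by ring, map_neg, neg_mul_neg]
  have step1 : (∏ i : Fin m, ∏ j ∈ Ioi i, (z i - z j) * (starRingEnd ℂ) (z i - z j))
      = Matrix.det (Matrix.vandermonde z)
        * (starRingEnd ℂ) (Matrix.det (Matrix.vandermonde z)) := by
    calc ∏ i : Fin m, ∏ j ∈ Ioi i, (z i - z j) * (starRingEnd ℂ) (z i - z j)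
        = ∏ i : Fin m, ∏ j ∈ Ioi i, (z j - z i) * (starRingEnd ℂ) (z j - z i) :=
          Finset.prod_congr rfl fun i _ => Finset.prod_congr rfl fun j _ => flip _ _
      _ = (∏ i : Fin m, ∏ j ∈ Ioi i, (z j - z i))
            * ∏ i : Fin m, ∏ j ∈ Ioi i, (starRingEnd ℂ) (z j - z i) := by
          rw [← Finset.prod_mul_distrib]
          exact Finset.prod_congr rfl fun i _ => Finset.prod_mul_distrib
      _ = _ := by
          rw [Matrix.det_vandermonde]
          congr 1
          rw [map_prod]
          exact Finset.prod_congr rfl fun i _ => (map_prod _ _ _).symm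
  rw [step1, vandermonde_expand, map_sum]
  have hconj : ∀ σ : Equiv.Perm (Fin m),
      (starRingEnd ℂ) (((Equiv.Perm.sign σ : ℤ) : ℂ) * ∏ i, z i ^ ((σ i : ℕ)))
      = ((Equiv.Perm.sign σ : ℤ) : ℂ) * ∏ i, ((starRingEnd ℂ) (z i)) ^ ((σ i : ℕ)) := by
    intro σ
    rw [map_mul, map_intCast, map_prod]
    simp_rw [map_pow]
  simp_rw [hconj]
  rw [Finset.sum_mul_sum]
  rw [Finset.sum_mul]
  refine Finset.sum_congr rfl fun σ _ => ?_
  rw [Finset.sum_mul]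
  refine Finset.sum_congr rfl fun τ _ => ?_
  rw [show ∀ A B C D P : ℂ, (A * P) * (B * C) * D = (A * B) * (P * C * D) from
    fun A B C D P => by ring]
  congr 1
  rw [← Finset.prod_mul_distrib, ← Finset.prod_mul_distrib]

section aux

lemma indicator_pi {m : ℕ} (f : Fin m → ℂ → ℂ) (z : Fin m → ℂ) :
    (Set.univ.pi fun _ : Fin m => Metric.closedBall (0:ℂ) 1).indicator
      (fun z => ∏ i, f i (z i)) z
    = ∏ i, (Metric.closedBall (0:ℂ) 1).indicator (f i) (z i) := by
  by_cases hz : z ∈ Set.univ.pi fun _ : Fin m => Metric.closedBall (0:ℂ) 1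
  · rw [Set.indicator_of_mem hz]
    exact Finset.prod_congr rfl fun i _ =>
      (Set.indicator_of_mem (hz i (Set.mem_univ i)) _).symm
  · rw [Set.indicator_of_notMem hz]
    rw [Set.mem_univ_pi] at hz
    push_neg at hz
    obtain ⟨i, hi⟩ := hz
    exact (Finset.prod_eq_zero (Finset.mem_univ i) (Set.indicator_of_notMem hi _)).symm

lemma g_integrable (a b c : ℕ) : Integrable ((Metric.closedBall (0:ℂ) 1).indicator
    (fun w => w^a * ((starRingEnd ℂ) w)^b * ((1 - ‖w‖^2 : ℝ):ℂ)^c)) volume := by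
  rw [integrable_indicator_iff measurableSet_closedBall]
  apply ContinuousOn.integrableOn_compact (isCompact_closedBall _ _)
  apply Continuous.continuousOn
  exact ((continuous_pow a).mul ((RCLike.continuous_conj (K := ℂ)).pow b)).mul
    ((Complex.continuous_ofReal.comp (by fun_prop)).pow c)

lemma term_integrable (c m : ℕ) (e f : Fin m → ℕ) :
    IntegrableOn (fun z : Fin m → ℂ =>
      ∏ i : Fin m, ((z i)^(e i) * ((starRingEnd ℂ) (z i))^(f i) * ((1 - ‖z i‖^2 : ℝ):ℂ)^c))
      (Set.univ.pi fun _ : Fin m => Metric.closedBall (0 : ℂ) 1)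
      (Measure.pi fun _ : Fin m => (volume : Measure ℂ)) := by
  have hSm : MeasurableSet (Set.univ.pi fun _ : Fin m => Metric.closedBall (0 : ℂ) 1) :=
    MeasurableSet.univ_pi fun i => measurableSet_closedBall
  rw [← integrable_indicator_iff hSm]
  rw [show ((Set.univ.pi fun _ : Fin m => Metric.closedBall (0 : ℂ) 1).indicator
      (fun z : Fin m → ℂ => ∏ i : Fin m, ((z i)^(e i) * ((starRingEnd ℂ) (z i))^(f i)
        * ((1 - ‖z i‖^2 : ℝ):ℂ)^c)))
      = fun z : Fin m → ℂ => ∏ i : Fin m, (Metric.closedBall (0:ℂ) 1).indicator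
        (fun w => w^(e i) * ((starRingEnd ℂ) w)^(f i) * ((1 - ‖w‖^2 : ℝ):ℂ)^c) (z i)
    from funext fun z => indicator_pi
      (fun i w => w^(e i) * ((starRingEnd ℂ) w)^(f i) * ((1 - ‖w‖^2 : ℝ):ℂ)^c) z]
  rw [← MeasureTheory.volume_pi]
  exact Integrable.fintype_prod_dep fun i => g_integrable (e i) (f i) c

lemma term_integral (c m : ℕ) (e f : Fin m → ℕ) :
    (∫ z in (Set.univ.pi fun _ : Fin m => Metric.closedBall (0 : ℂ) 1),
      (∏ i : Fin m, ((z i)^(e i) * ((starRingEnd ℂ) (z i))^(f i) * ((1 - ‖z i‖^2 : ℝ):ℂ)^c))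
      ∂(Measure.pi fun _ : Fin m => (volume : Measure ℂ)))
    = ∏ i : Fin m, (if e i = f i
        then ((π * (e i).factorial * c.factorial / (e i+c+1).factorial : ℝ) : ℂ) else 0) := by
  have hSm : MeasurableSet (Set.univ.pi fun _ : Fin m => Metric.closedBall (0 : ℂ) 1) :=
    MeasurableSet.univ_pi fun i => measurableSet_closedBall
  rw [← MeasureTheory.integral_indicator hSm]
  rw [show ((Set.univ.pi fun _ : Fin m => Metric.closedBall (0 : ℂ) 1).indicator
      (fun z : Fin m → ℂ => ∏ i : Fin m, ((z i)^(e i) * ((starRingEnd ℂ) (z i))^(f i)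
        * ((1 - ‖z i‖^2 : ℝ):ℂ)^c)))
      = fun z : Fin m → ℂ => ∏ i : Fin m, (Metric.closedBall (0:ℂ) 1).indicator
        (fun w => w^(e i) * ((starRingEnd ℂ) w)^(f i) * ((1 - ‖w‖^2 : ℝ):ℂ)^c) (z i)
    from funext fun z => indicator_pi
      (fun i w => w^(e i) * ((starRingEnd ℂ) w)^(f i) * ((1 - ‖w‖^2 : ℝ):ℂ)^c) z]
  beta_reduce
  rw [MeasureTheory.integral_fintype_prod_eq_prod (ι := Fin m)
    (fun i w => (Metric.closedBall (0:ℂ) 1).indicator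
      (fun w => w^(e i) * ((starRingEnd ℂ) w)^(f i) * ((1 - ‖w‖^2 : ℝ):ℂ)^c) w)]
  exact Finset.prod_congr rfl fun i _ => discInt (e i) (f i) c

end aux

/-- The normalization integral for the eigenvalue density of truncated Haar unitaries
(Życzkowski–Sommers density): for `n > m ≥ 1`,
`∫_{D^m} ∏_{i<j} |z_i - z_j|² ∏_i (1 - |z_i|²)^{n-m-1} dz
  = π^m m! ∏_{k=0}^{m-1} binom(n-m+k-1, k)⁻¹ (n-m+k)⁻¹`,
where `D` is the closed unit disc and each coordinate carries Lebesgue measure on `ℂ`. -/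
theorem stmt18 (n m : ℕ) (hm : 1 ≤ m) (hmn : m < n) :
    ∫ z in (Set.univ.pi fun _ : Fin m => Metric.closedBall (0 : ℂ) 1),
      (∏ i : Fin m, ∏ j ∈ Ioi i, ‖z i - z j‖ ^ 2) *
        ∏ i : Fin m, (1 - ‖z i‖ ^ 2) ^ (n - m - 1)
      ∂(Measure.pi fun _ : Fin m => (volume : Measure ℂ))
    = Real.pi ^ m * m.factorial *
        ∏ k ∈ range m, (((n - m + k - 1).choose k : ℝ))⁻¹ * ((n - m + k : ℕ) : ℝ)⁻¹ := by
  set c := n - m - 1 with hc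
  rw [← Complex.ofReal_inj]
  have cast_int : ∀ (μ : Measure (Fin m → ℂ)) (f : (Fin m → ℂ) → ℝ),
      ((∫ z, f z ∂μ : ℝ) : ℂ) = ∫ z, ((f z : ℝ) : ℂ) ∂μ := fun μ f =>
    (integral_ofReal (𝕜 := ℂ)).symm
  rw [cast_int]
  simp_rw [pointwise c m]
  rw [MeasureTheory.integral_finset_sum univ (fun σ _ => integrable_finset_sum _
    (fun τ _ => (term_integrable c m _ _).const_mul _))]
  have step1 : ∀ σ : Equiv.Perm (Fin m),
      (∫ z in (Set.univ.pi fun _ : Fin m => Metric.closedBall (0 : ℂ) 1),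
        (∑ τ : Equiv.Perm (Fin m),
          (((Equiv.Perm.sign σ : ℤ) : ℂ) * ((Equiv.Perm.sign τ : ℤ) : ℂ)) *
          ∏ i : Fin m, ((z i)^((σ i : ℕ)) * ((starRingEnd ℂ) (z i))^((τ i : ℕ))
            * ((1 - ‖z i‖^2 : ℝ) : ℂ)^c))
        ∂(Measure.pi fun _ : Fin m => (volume : Measure ℂ)))
      = ∑ τ : Equiv.Perm (Fin m),
          (((Equiv.Perm.sign σ : ℤ) : ℂ) * ((Equiv.Perm.sign τ : ℤ) : ℂ)) *
          ∏ i : Fin m, (if (σ i : ℕ) = (τ i : ℕ)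
            then ((π * (σ i : ℕ).factorial * c.factorial / ((σ i : ℕ)+c+1).factorial : ℝ) : ℂ)
            else 0) := by
    intro σ
    rw [MeasureTheory.integral_finset_sum univ
      (fun τ _ => (term_integrable c m _ _).const_mul _)]
    exact Finset.sum_congr rfl fun τ _ => by
      rw [MeasureTheory.integral_const_mul, term_integral c m _ _]
  simp_rw [step1]
  have step2 : ∀ σ τ : Equiv.Perm (Fin m),
      (∏ i : Fin m, (if (σ i : ℕ) = (τ i : ℕ)
          then ((π * (σ i : ℕ).factorial * c.factorial / ((σ i : ℕ)+c+1).factorial : ℝ) : ℂ)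
          else 0))
      = if σ = τ then ∏ i : Fin m,
          ((π * (σ i : ℕ).factorial * c.factorial / ((σ i : ℕ)+c+1).factorial : ℝ) : ℂ) else 0 := by
    intro σ τ
    by_cases h : σ = τ
    · subst h; simp
    · rw [if_neg h]
      have : ¬ ∀ i, σ i = τ i := fun hh => h (Equiv.ext hh)
      push_neg at this
      obtain ⟨i, hi⟩ := this
      exact Finset.prod_eq_zero (Finset.mem_univ i)
        (if_neg (fun hv => hi (Fin.val_injective hv)))
  simp_rw [step2, mul_ite, mul_zero, Finset.sum_ite_eq, Finset.mem_univ, if_pos]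
  have hsgn : ∀ σ : Equiv.Perm (Fin m),
      ((Equiv.Perm.sign σ : ℤ) : ℂ) * ((Equiv.Perm.sign σ : ℤ) : ℂ) = 1 := fun σ => by
    rw [← Int.cast_mul, ← Units.val_mul, Int.units_mul_self, Units.val_one, Int.cast_one]
  have hre : ∀ σ : Equiv.Perm (Fin m),
      (∏ i : Fin m, ((π * (σ i : ℕ).factorial * c.factorial / ((σ i : ℕ)+c+1).factorial : ℝ) : ℂ))
      = ∏ i : Fin m, ((π * (i : ℕ).factorial * c.factorial / ((i : ℕ)+c+1).factorial : ℝ) : ℂ) :=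
    fun σ => Equiv.prod_comp σ
      (fun i : Fin m => ((π * (i : ℕ).factorial * c.factorial / ((i : ℕ)+c+1).factorial : ℝ) : ℂ))
  simp_rw [hsgn, hre, one_mul]
  rw [Finset.sum_const, Finset.card_univ, Fintype.card_perm, Fintype.card_fin, nsmul_eq_mul]
  rw [Fin.prod_univ_eq_prod_range
    (fun k : ℕ => ((π * k.factorial * c.factorial / (k+c+1).factorial : ℝ) : ℂ)) m]
  rw [Complex.ofReal_mul, Complex.ofReal_mul, Complex.ofReal_prod, Complex.ofReal_pow]
  rw [show ((π:ℝ):ℂ)^m = ∏ _k ∈ range m, ((π:ℝ):ℂ) from by rw [prod_const, card_range]]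
  rw [show (((m.factorial : ℕ):ℝ):ℂ) = ((m.factorial : ℕ):ℂ) from by push_cast; ring]
  rw [mul_comm (∏ _k ∈ range m, ((π:ℝ):ℂ)) _, mul_assoc, ← Finset.prod_mul_distrib]
  congr 1
  refine Finset.prod_congr rfl fun k _ => ?_
  have h1 : n - m + k - 1 = k + c := by omega
  have h2 : n - m + k = k + c + 1 := by omega
  rw [h1, h2, ← Complex.ofReal_mul, Complex.ofReal_inj]
  have hch : ((k+c).choose k : ℝ) * k.factorial * c.factorial = ((k+c).factorial : ℝ) := by
    have := Nat.choose_mul_factorial_mul_factorial (Nat.le_add_right k c)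
    rw [Nat.add_sub_cancel_left] at this
    exact_mod_cast this
  have hfs : ((k+c+1).factorial : ℝ) = (k+c+1) * ((k+c).factorial : ℝ) := by
    exact_mod_cast congrArg (Nat.cast (R := ℝ)) (Nat.factorial_succ (k+c))
  have hch0 : ((k+c).choose k : ℝ) ≠ 0 := by
    exact_mod_cast (Nat.choose_pos (Nat.le_add_right k c)).ne'
  have hf0 : ((k+c).factorial : ℝ) ≠ 0 := by exact_mod_cast Nat.factorial_ne_zero _
  have hkc0 : ((k:ℝ)+c+1) ≠ 0 := by positivity
  rw [hfs]
  push_cast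
  push_cast at hch
  field_simp
  linear_combination hch
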